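/- Let d be a positive natural number, σ > 0, Δ > 0, and let x, y : Fin d → ℝ satisfy Σᵢ (xᵢ − yᵢ)² ≤ Δ². Then for every α ∈ (1, ∞), the Rényi divergence of order α between the product Gaussian measures ⊗ᵢ N(xᵢ, Δ²σ²) and ⊗ᵢ N(yᵢ, Δ²σ²) on ℝ^d satisfies D_α ≤ α/(2σ²). In other words, the Gaussian mechanism GM(f) = f(D) + Δ·N(0, σ²·I_d), applied to a function f with user-level L2 sensitivity Δ, satisfies (1/(2σ²))-zCDP. -/

import Mathlib

open MeasureTheory ProbabilityTheory Real
open scoped ENNReal NNReal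

/-- The Rényi divergence of order `α` between measures `μ` and `ν`:
`D_α(μ‖ν) = (α − 1)⁻¹ · log ∫ (dμ/dν)^α dν`. -/
noncomputable def renyiDiv {X : Type*} [MeasurableSpace X] (α : ℝ) (μ ν : Measure X) : ℝ :=
  (α - 1)⁻¹ * Real.log (∫ x, ((μ.rnDeriv ν x).toReal) ^ α ∂ν)

section AuxLemmas

lemma lintegral_pi_prod {n : ℕ} {X : Fin n → Type*} [∀ i, MeasurableSpace (X i)]
    (μ : ∀ i, Measure (X i)) [∀ i, SigmaFinite (μ i)]
    (f : ∀ i, X i → ℝ≥0∞) (hf : ∀ i, Measurable (f i)) :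
    ∫⁻ t, ∏ i, f i (t i) ∂Measure.pi μ = ∏ i, ∫⁻ s, f i s ∂μ i := by
  induction n with
  | zero => simp [Measure.pi_of_empty]
  | succ n ih =>
    have h := (measurePreserving_piFinSuccAbove μ 0).symm
    have hmeas : Measurable fun t : ∀ i, X i => ∏ i, f i (t i) :=
      Finset.measurable_prod _ fun i _ => (hf i).comp (measurable_pi_apply i)
    rw [← h.lintegral_comp hmeas]
    simp_rw [MeasurableEquiv.piFinSuccAbove_symm_apply, Fin.insertNthEquiv,
      Fin.prod_univ_succ, Fin.insertNth_zero, Equiv.coe_fn_mk, Fin.cons_succ,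
      Fin.zero_succAbove, Fin.cons_zero]
    erw [lintegral_prod_mul (μ := μ 0) (ν := Measure.pi fun j : Fin n => μ (Fin.succ j))
      (f := f 0) (g := fun t => ∏ j : Fin n, f (Fin.succ j) (t j))
      (hf 0).aemeasurable
      (Finset.measurable_prod _ fun j _ =>
        (hf _).comp (measurable_pi_apply j)).aemeasurable]
    rw [ih (fun j => μ (Fin.succ j)) (fun j => f (Fin.succ j)) (fun j => hf _)]

lemma pi_withDensity_aux {d : ℕ} (f : Fin d → ℝ → ℝ≥0∞) (hf : ∀ i, Measurable (f i))
    (hsf : ∀ i, SigmaFinite ((volume : Measure ℝ).withDensity (f i))) :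
    (Measure.pi fun i => (volume : Measure ℝ).withDensity (f i)) =
      (Measure.pi fun _ : Fin d => (volume : Measure ℝ)).withDensity
        (fun t => ∏ i, f i (t i)) := by
  haveI := hsf
  refine Measure.pi_eq fun s hs => ?_
  rw [withDensity_apply _ (MeasurableSet.univ_pi hs),
    ← lintegral_indicator (MeasurableSet.univ_pi hs) _]
  have hind : ∀ t : Fin d → ℝ,
      (Set.univ.pi s).indicator (fun t => ∏ i, f i (t i)) t
        = ∏ i, (s i).indicator (f i) (t i) := by
    intro t
    by_cases ht : t ∈ Set.univ.pi s
    · rw [Set.indicator_of_mem ht]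
      exact Finset.prod_congr rfl fun i _ =>
        (Set.indicator_of_mem (ht i trivial) _).symm
    · rw [Set.indicator_of_notMem ht]
      obtain ⟨j, hj⟩ : ∃ j, t j ∉ s j := by simpa [Set.mem_pi] using ht
      exact (Finset.prod_eq_zero (Finset.mem_univ j)
        (Set.indicator_of_notMem hj _)).symm
  rw [lintegral_congr hind]
  rw [lintegral_pi_prod (fun _ : Fin d => (volume : Measure ℝ))
    (fun i => (s i).indicator (f i)) (fun i => (hf i).indicator (hs i))]
  exact Finset.prod_congr rfl fun i _ => by
    rw [lintegral_indicator (hs i) _, withDensity_apply _ (hs i)]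

lemma integral_pi_prod {n : ℕ} {X : Fin n → Type*} [∀ i, MeasurableSpace (X i)]
    (μ : ∀ i, Measure (X i)) [∀ i, SigmaFinite (μ i)] (f : ∀ i, X i → ℝ) :
    ∫ t, ∏ i, f i (t i) ∂Measure.pi μ = ∏ i, ∫ s, f i s ∂μ i := by
  induction n with
  | zero => simp [Measure.pi_of_empty, measureReal_def]
  | succ n ih =>
    rw [← ((measurePreserving_piFinSuccAbove μ 0).symm).integral_comp']
    simp_rw [MeasurableEquiv.piFinSuccAbove_symm_apply, Fin.insertNthEquiv,
      Fin.prod_univ_succ, Fin.insertNth_zero, Equiv.coe_fn_mk, Fin.cons_succ,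
      Fin.zero_succAbove, Fin.cons_zero]
    erw [integral_prod_mul (μ := μ 0) (ν := Measure.pi fun j : Fin n => μ (Fin.succ j)) (f 0) (fun t => ∏ j : Fin n, f (Fin.succ j) (t j))]
    rw [ih (fun j => μ (Fin.succ j)) (fun j => f (Fin.succ j))]

lemma integral_gaussianReal_eq (m : ℝ) {v : ℝ≥0} (hv : v ≠ 0) (q : ℝ → ℝ) :
    ∫ s, q s ∂gaussianReal m v = ∫ s, gaussianPDFReal m v s * q s := by
  rw [gaussianReal_of_var_ne_zero _ hv]
  have h : volume.withDensity (gaussianPDF m v)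
      = volume.withDensity (fun s => ((gaussianPDFReal m v s).toNNReal : ℝ≥0∞)) := rfl
  rw [h, integral_withDensity_eq_integral_smul (measurable_gaussianPDFReal m v).real_toNNReal q]
  refine integral_congr_ae (ae_of_all _ fun s => ?_)
  simp [NNReal.smul_def, Real.coe_toNNReal _ (gaussianPDFReal_nonneg m v s)]

lemma gaussian_renyi_onedim (m₁ m₂ : ℝ) {v : ℝ≥0} (hv : v ≠ 0) (α : ℝ) :
    ∫ s, gaussianPDFReal m₂ v s * (gaussianPDFReal m₁ v s / gaussianPDFReal m₂ v s) ^ α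
      = Real.exp (α * (α - 1) * (m₁ - m₂) ^ 2 / (2 * v)) := by
  have hvpos : (0:ℝ) < v := by positivity
  have hc : (0:ℝ) < (√(2 * π * (v:ℝ)))⁻¹ := by positivity
  have key : ∀ s : ℝ,
      gaussianPDFReal m₂ v s * (gaussianPDFReal m₁ v s / gaussianPDFReal m₂ v s) ^ α
        = Real.exp (α * (α - 1) * (m₁ - m₂) ^ 2 / (2 * v))
            * gaussianPDFReal (α * m₁ + (1 - α) * m₂) v s := by
    intro s
    simp only [gaussianPDFReal]
    rw [mul_div_mul_left _ _ hc.ne', ← Real.exp_sub,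
      Real.rpow_def_of_pos (Real.exp_pos _), Real.log_exp,
      mul_assoc, ← Real.exp_add]
    rw [show ∀ a b : ℝ, rexp a * ((√(2 * π * (v:ℝ)))⁻¹ * rexp b) =
        (√(2 * π * (v:ℝ)))⁻¹ * rexp (b + a) from fun a b => by rw [Real.exp_add]; ring]
    congr 1
    field_simp
    ring
  simp_rw [key]
  rw [integral_const_mul, integral_gaussianPDFReal_eq_one _ hv, mul_one]

end AuxLemmas

/-- The Gaussian mechanism with noise multiplier `σ` and sensitivity `Δ` satisfies
`(1/(2σ²))`-zCDP: for outputs `x, y : Fin d → ℝ` differing by at most `Δ` in L2 norm,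
the Rényi divergence of order `α` between the product Gaussian measures
`⊗ᵢ N(xᵢ, Δ²σ²)` and `⊗ᵢ N(yᵢ, Δ²σ²)` is at most `α/(2σ²)`. -/
theorem gaussian_mechanism_zCDP (d : ℕ) (hd : 0 < d) (σ Δ : ℝ) (hσ : 0 < σ) (hΔ : 0 < Δ)
    (x y : Fin d → ℝ) (hxy : ∑ i, (x i - y i) ^ 2 ≤ Δ ^ 2) (α : ℝ) (hα : 1 < α) :
    renyiDiv α
        (Measure.pi fun i : Fin d => gaussianReal (x i) ((Δ ^ 2 * σ ^ 2).toNNReal))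
        (Measure.pi fun i : Fin d => gaussianReal (y i) ((Δ ^ 2 * σ ^ 2).toNNReal))
      ≤ α / (2 * σ ^ 2) := by
  have hα0 : (0:ℝ) < α := lt_trans one_pos hα
  have hα1 : α - 1 ≠ 0 := sub_ne_zero.2 (ne_of_gt hα)
  set v : ℝ≥0 := (Δ ^ 2 * σ ^ 2).toNNReal with hvdef
  have hVpos : (0:ℝ) < Δ ^ 2 * σ ^ 2 := by positivity
  have hvco : ((v:ℝ)) = Δ ^ 2 * σ ^ 2 := Real.coe_toNNReal _ hVpos.le
  have hvpos : (0:ℝ) < (v:ℝ) := hvco ▸ hVpos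
  have hv0 : v ≠ 0 := fun h => by simp [h] at hvpos
  set F : (Fin d → ℝ) → ℝ≥0∞ := fun t => ∏ i, gaussianPDF (x i) v (t i) with hF
  set G : (Fin d → ℝ) → ℝ≥0∞ := fun t => ∏ i, gaussianPDF (y i) v (t i) with hG
  have hFmeas : Measurable F :=
    Finset.measurable_prod _ fun i _ =>
      (measurable_gaussianPDF _ _).comp (measurable_pi_apply i)
  have hGmeas : Measurable G :=
    Finset.measurable_prod _ fun i _ =>
      (measurable_gaussianPDF _ _).comp (measurable_pi_apply i)
  set piv : Measure (Fin d → ℝ) := Measure.pi fun _ : Fin d => (volume : Measure ℝ) with hpiv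
  have hμ : (Measure.pi fun i => gaussianReal (x i) v) = piv.withDensity F := by
    rw [show (fun i : Fin d => gaussianReal (x i) v)
        = fun i => (volume : Measure ℝ).withDensity (gaussianPDF (x i) v) from
      funext fun i => gaussianReal_of_var_ne_zero _ hv0]
    exact pi_withDensity_aux _ (fun i => measurable_gaussianPDF _ _)
      (fun i => by rw [← gaussianReal_of_var_ne_zero _ hv0]; infer_instance)
  have hν : (Measure.pi fun i => gaussianReal (y i) v) = piv.withDensity G := by
    rw [show (fun i : Fin d => gaussianReal (y i) v)
        = fun i => (volume : Measure ℝ).withDensity (gaussianPDF (y i) v) from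
      funext fun i => gaussianReal_of_var_ne_zero _ hv0]
    exact pi_withDensity_aux _ (fun i => measurable_gaussianPDF _ _)
      (fun i => by rw [← gaussianReal_of_var_ne_zero _ hv0]; infer_instance)
  have hGpos : ∀ t, G t ≠ 0 := fun t =>
    Finset.prod_ne_zero_iff.2 fun i _ => (gaussianPDF_pos _ hv0 _).ne'
  have hGtop : ∀ t, G t ≠ ∞ := fun t =>
    ENNReal.prod_ne_top fun i _ => ENNReal.ofReal_ne_top
  have hrn : (Measure.pi fun i => gaussianReal (x i) v).rnDeriv
        (Measure.pi fun i => gaussianReal (y i) v)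
      =ᵐ[Measure.pi fun i => gaussianReal (y i) v] fun t => (G t)⁻¹ * F t := by
    have h1 := Measure.rnDeriv_withDensity_right
      (Measure.pi fun i => gaussianReal (x i) v) piv hGmeas.aemeasurable
      (ae_of_all _ hGpos) (ae_of_all _ hGtop)
    have h2 : (Measure.pi fun i => gaussianReal (x i) v).rnDeriv piv =ᵐ[piv] F := by
      rw [hμ]; exact Measure.rnDeriv_withDensity piv hFmeas
    have hac : (Measure.pi fun i => gaussianReal (y i) v) ≪ piv := by
      rw [hν]; exact withDensity_absolutelyContinuous piv G
    refine hac.ae_eq ?_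
    rw [← hν] at h1
    filter_upwards [h1, h2] with t h1t h2t
    rw [h1t, h2t]
  have hI : (∫ t, (((Measure.pi fun i => gaussianReal (x i) v).rnDeriv
        (Measure.pi fun i => gaussianReal (y i) v) t).toReal) ^ α
        ∂(Measure.pi fun i => gaussianReal (y i) v))
      = Real.exp (α * (α - 1) * (∑ i, (x i - y i) ^ 2) / (2 * (v:ℝ))) := by
    rw [integral_congr_ae (hrn.mono fun t ht => by rw [ht])]
    have hpt : ∀ t : Fin d → ℝ, (((G t)⁻¹ * F t).toReal) ^ α
        = ∏ i, (gaussianPDFReal (x i) v (t i) / gaussianPDFReal (y i) v (t i)) ^ α := by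
      intro t
      rw [ENNReal.toReal_mul, ENNReal.toReal_inv, hF, hG,
        ENNReal.toReal_prod, ENNReal.toReal_prod]
      simp_rw [gaussianPDF, ENNReal.toReal_ofReal (gaussianPDFReal_nonneg _ _ _)]
      rw [inv_mul_eq_div, ← Finset.prod_div_distrib,
        ← Real.finset_prod_rpow _ _
          (fun i _ => div_nonneg (gaussianPDFReal_nonneg _ _ _)
            (gaussianPDFReal_nonneg _ _ _)) α]
    simp_rw [hpt]
    rw [integral_pi_prod (fun i => gaussianReal (y i) v)
      (fun i s => (gaussianPDFReal (x i) v s / gaussianPDFReal (y i) v s) ^ α)]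
    have h1d : ∀ i : Fin d,
        (∫ s, (gaussianPDFReal (x i) v s / gaussianPDFReal (y i) v s) ^ α
          ∂gaussianReal (y i) v)
        = Real.exp (α * (α - 1) * (x i - y i) ^ 2 / (2 * (v:ℝ))) := by
      intro i
      rw [integral_gaussianReal_eq _ hv0, gaussian_renyi_onedim _ _ hv0]
    simp_rw [h1d]
    rw [← Real.exp_sum]
    rw [← Finset.sum_div, ← Finset.mul_sum]
  show (α - 1)⁻¹ * Real.log _ ≤ _
  rw [hI, Real.log_exp]
  have heq : (α - 1)⁻¹ * (α * (α - 1) * (∑ i, (x i - y i) ^ 2) / (2 * (v:ℝ)))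
      = α * (∑ i, (x i - y i) ^ 2) / (2 * (v:ℝ)) := by
    field_simp
  rw [heq, hvco, div_le_div_iff₀ (by positivity) (by positivity)]
  have h2 : α * (∑ i, (x i - y i) ^ 2) ≤ α * Δ ^ 2 :=
    mul_le_mul_of_nonneg_left hxy hα0.le
  nlinarith [sq_nonneg σ, mul_le_mul_of_nonneg_right h2 (by positivity : (0:ℝ) ≤ 2 * σ ^ 2)]
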